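/- Let f : ℝ^p → ℝ be twice differentiable at the point λ = γ ∘ γ (with γ ∈ ℝ^p, (γ ∘ γ)_k = γ_k²), and define g = f ∘ F with F(γ) = γ ∘ γ. Then g is twice differentiable at γ and its Hessian matrix satisfies ∇²g(γ) = 2 D_{∇f(λ)} + 4 (γγᵀ) ∘ ∇²f(λ); entrywise, ∂²g/∂γ_h∂γ_k (γ) = 2 (∇f(λ))_k 𝟙(k = h) + 4 γ_k γ_h (∂²f/∂λ_h∂λ_k)(λ). -/

import Mathlib

open Filter ContinuousLinearMap

set_option maxHeartbeats 1000000

noncomputable def Lsq (p : ℕ) : (Fin p → ℝ) →L[ℝ] ((Fin p → ℝ) →L[ℝ] (Fin p → ℝ)) :=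
  LinearMap.toContinuousLinearMap
  { toFun := fun x => ContinuousLinearMap.pi fun k => (2 * x k) • ContinuousLinearMap.proj k
    map_add' := by
      intro x y; ext v j; simp [mul_add, add_mul]
    map_smul' := by
      intro c x; ext v j; simp; ring }

lemma Lsq_apply {p : ℕ} (x v : Fin p → ℝ) (j : Fin p) : Lsq p x v j = 2 * x j * v j := by
  simp [Lsq, LinearMap.toContinuousLinearMap]

lemma hasFDerivAt_sq {p : ℕ} (x : Fin p → ℝ) :
    HasFDerivAt (fun z : Fin p → ℝ => (fun k => z k * z k)) (Lsq p x) x := by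
  rw [hasFDerivAt_pi']
  intro k
  have h0 : HasFDerivAt (fun z : Fin p → ℝ => z k)
      ((ContinuousLinearMap.proj k : (Fin p → ℝ) →L[ℝ] ℝ)) x :=
    (ContinuousLinearMap.proj k : (Fin p → ℝ) →L[ℝ] ℝ).hasFDerivAt
  have h1 := h0.mul h0
  refine h1.congr_fderiv ?_
  ext v
  simp [Lsq_apply]
  ring

lemma Lsq_single {p : ℕ} (x : Fin p → ℝ) (h : Fin p) :
    Lsq p x (Pi.single h 1) = (2 * x h) • (Pi.single h 1 : Fin p → ℝ) := by
  ext j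
  simp only [Lsq_apply, Pi.smul_apply, smul_eq_mul, Pi.single_apply]
  by_cases hj : j = h <;> simp [hj]

lemma Lsq_single_single {p : ℕ} (k h : Fin p) :
    Lsq p (Pi.single h 1) (Pi.single k 1)
      = if k = h then (2:ℝ) • (Pi.single k 1 : Fin p → ℝ) else 0 := by
  ext j
  by_cases hkh : k = h
  · subst hkh
    simp only [Lsq_apply, if_pos rfl, Pi.smul_apply, smul_eq_mul, Pi.single_apply]
    by_cases hj : j = k <;> simp [hj]
  · simp only [Lsq_apply, if_neg hkh, Pi.zero_apply, Pi.single_apply]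
    by_cases hj : j = h <;> by_cases hj' : j = k <;>
      simp_all [mul_comm]

/-- Hessian chain rule for the entrywise-squaring reparameterization: if `f` is
differentiable near `λ = γ ∘ γ` with derivative differentiable at `λ` (twice
differentiable at `λ`), then `g = f ∘ F` with `F(γ) = γ ∘ γ` is twice differentiable
at `γ` and its second partials satisfy
`∂²g/∂γ_h∂γ_k(γ) = 2 (∇f(λ))_k 𝟙(k=h) + 4 γ_k γ_h ∂²f/∂λ_h∂λ_k(λ)`. -/
theorem hessian_of_squared_reparameterization (p : ℕ)
    (f : (Fin p → ℝ) → ℝ) (γ : Fin p → ℝ)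
    (hf1 : ∀ᶠ x in nhds (fun k => γ k * γ k), DifferentiableAt ℝ f x)
    (hf2 : DifferentiableAt ℝ (fderiv ℝ f) (fun k => γ k * γ k)) :
    (∀ᶠ x in nhds γ,
        DifferentiableAt ℝ (fun z : Fin p → ℝ => f (fun k => z k * z k)) x) ∧
    DifferentiableAt ℝ (fderiv ℝ (fun z : Fin p → ℝ => f (fun k => z k * z k))) γ ∧
    ∀ k h : Fin p,
      fderiv ℝ
          (fun z : Fin p → ℝ =>
            fderiv ℝ (fun w : Fin p → ℝ => f (fun k' => w k' * w k')) z
              (Pi.single k 1)) γ (Pi.single h 1) =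
        2 * fderiv ℝ f (fun k' => γ k' * γ k') (Pi.single k 1) * (if k = h then 1 else 0)
          + 4 * γ k * γ h *
            fderiv ℝ (fun z : Fin p → ℝ => fderiv ℝ f z (Pi.single k 1))
              (fun k' => γ k' * γ k') (Pi.single h 1) := by
  have hFcont : Continuous (fun z : Fin p → ℝ => (fun k => z k * z k)) := by
    continuity
  have hev : ∀ᶠ x in nhds γ, DifferentiableAt ℝ f (fun k => x k * x k) :=
    (hFcont.tendsto γ).eventually hf1
  have hgdiff : ∀ᶠ x in nhds γ,
      DifferentiableAt ℝ (fun z : Fin p → ℝ => f (fun k => z k * z k)) x := by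
    filter_upwards [hev] with x hx
    exact hx.comp x (hasFDerivAt_sq x).differentiableAt
  have hgderiv : (fun x : Fin p → ℝ => (fderiv ℝ f (fun k => x k * x k)).comp (Lsq p x))
      =ᶠ[nhds γ] fderiv ℝ (fun z : Fin p → ℝ => f (fun k => z k * z k)) := by
    filter_upwards [hev] with x hx
    exact (((hx.hasFDerivAt).comp x (hasFDerivAt_sq x)).fderiv).symm
  have hc : HasFDerivAt (fun x : Fin p → ℝ => fderiv ℝ f (fun k => x k * x k))
      ((fderiv ℝ (fderiv ℝ f) (fun k => γ k * γ k)).comp (Lsq p γ)) γ :=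
    (hf2.hasFDerivAt).comp γ (hasFDerivAt_sq γ)
  have hd : HasFDerivAt (fun x : Fin p → ℝ => Lsq p x) (Lsq p) γ := (Lsq p).hasFDerivAt
  have hG := hc.clm_comp hd
  have hg2 := hG.congr_of_eventuallyEq hgderiv.symm
  refine ⟨hgdiff, hg2.differentiableAt, ?_⟩
  intro k h
  have hL := (((ContinuousLinearMap.apply ℝ ℝ (Pi.single k 1 : Fin p → ℝ)).hasFDerivAt).comp γ hg2).fderiv
  have hR := (((ContinuousLinearMap.apply ℝ ℝ (Pi.single k 1 : Fin p → ℝ)).hasFDerivAt).comp (fun k' => γ k' * γ k') hf2.hasFDerivAt).fderiv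
  rw [show (fun z : Fin p → ℝ =>
        fderiv ℝ (fun w : Fin p → ℝ => f (fun k' => w k' * w k')) z (Pi.single k 1))
      = (ContinuousLinearMap.apply ℝ ℝ (Pi.single k 1 : Fin p → ℝ)) ∘
        (fderiv ℝ (fun z : Fin p → ℝ => f (fun k => z k * z k))) from rfl, hL]
  rw [show (fun z : Fin p → ℝ => fderiv ℝ f z (Pi.single k 1))
      = (ContinuousLinearMap.apply ℝ ℝ (Pi.single k 1 : Fin p → ℝ)) ∘
        (fderiv ℝ f) from rfl, hR]
  simp only [ContinuousLinearMap.coe_comp', Function.comp_apply,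
    ContinuousLinearMap.add_apply, ContinuousLinearMap.comp_apply,
    ContinuousLinearMap.flip_apply, ContinuousLinearMap.compL_apply,
    ContinuousLinearMap.apply_apply, Lsq_single, Lsq_single_single, map_smul,
    ContinuousLinearMap.smul_apply, ContinuousLinearMap.coe_smul', Pi.smul_apply,
    smul_eq_mul]
  by_cases hkh : k = h
  · subst hkh
    simp only [if_pos rfl, Pi.single_eq_same, if_true, eq_self_iff_true]
    ring
  · rw [Pi.single_eq_of_ne hkh, if_neg hkh]
    ring
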